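/- Let (Ω,T) be a strictly ergodic (i.e. minimal and uniquely ergodic) subshift over a finite alphabet A with associated set of words W, and let B be a Banach space. Then for every additive function F: W → B the limit lim_{|w|→∞} F(w)/|w| exists, i.e. there is x ∈ B such that for every ε > 0 there is L with ‖F(w)/|w| − x‖ ≤ ε for all w ∈ W with |w| ≥ L. -/

import Mathlib

open Filter Topology

namespace SubshiftErgodic

variable {A : Type*}

/-- The shift map `T` on two-sided sequences over `A`: `(T ω) n = ω (n+1)`. -/
def shift (ω : ℤ → A) : ℤ → A := fun n => ω (n + 1)

/-- The `n`-th power of the shift: `(shiftZ n ω) k = ω (k + n)`. -/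
def shiftZ (n : ℤ) (ω : ℤ → A) : ℤ → A := fun k => ω (k + n)

/-- `Ω` is a subshift: a closed, shift-invariant subset of `A^ℤ`. -/
def IsSubshift [TopologicalSpace A] (Ω : Set (ℤ → A)) : Prop :=
  IsClosed Ω ∧ shift '' Ω = Ω

/-- Minimality: every orbit `{T^n ω : n ∈ ℤ}` is dense in `Ω`. -/
def IsMinimal [TopologicalSpace A] (Ω : Set (ℤ → A)) : Prop :=
  ∀ ω ∈ Ω, Ω ⊆ closure {ρ | ∃ n : ℤ, ρ = shiftZ n ω}

/-- The finite word `w` occurs in the sequence `ω` at position `k`. -/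
def OccursAt (w : List A) (ω : ℤ → A) (k : ℤ) : Prop :=
  ∀ i : Fin w.length, ω (k + (i : ℕ)) = w.get i

/-- The set `W = W(Ω)` of finite words occurring as factors of elements of `Ω`. -/
def words (Ω : Set (ℤ → A)) : Set (List A) :=
  {w | ∃ ω ∈ Ω, ∃ k : ℤ, OccursAt w ω k}

/-- `v` occurs as a factor of the finite word `w` at position `i`. -/
def OccursIn (v w : List A) (i : ℕ) : Prop :=
  i + v.length ≤ w.length ∧ v <+: w.drop i

/-- `♯_v(w)`: the number of occurrences of `v` as a factor of `w`. -/
noncomputable def occ (v w : List A) : ℕ :=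
  {i : ℕ | OccursIn v w i}.ncard

/-- `z` is a return word of `u` (relative to the set of words `W`). -/
def IsReturnWord (W : Set (List A)) (z u : List A) : Prop :=
  z ∈ W ∧ z ++ u ∈ W ∧ occ u (z ++ u) = 2 ∧ u <+: z ++ u

/-- The maximal number of pairwise disjoint occurrences of `v` as a factor of `w`. -/
noncomputable def maxDisjoint (v w : List A) : ℕ :=
  sSup {m : ℕ | ∃ s : Fin m → ℕ, (∀ i, OccursIn v w (s i)) ∧
    ∀ i j : Fin m, i < j → s i + v.length ≤ s j}

/-- The filter expressing `|w| → ∞` along words `w ∈ W`. -/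
def wordsFilter (W : Set (List A)) : Filter (List A) :=
  ⨅ L : ℕ, Filter.principal {w | w ∈ W ∧ L ≤ w.length}

/-- `lim_{|w| → ∞} g w = x` over `w ∈ W`: for every `ε > 0` there is `L` with
`‖g w - x‖ ≤ ε` for all `w ∈ W` with `|w| ≥ L`. -/
def TendstoWords {B : Type*} [SeminormedAddCommGroup B] (W : Set (List A))
    (g : List A → B) (x : B) : Prop :=
  ∀ ε : ℝ, 0 < ε → ∃ L : ℕ, ∀ w ∈ W, L ≤ w.length → ‖g w - x‖ ≤ ε

/-- `liminf_{|w| → ∞} g w` over `w ∈ W`, valued in the extended reals. -/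
noncomputable def liminfWords (W : Set (List A)) (g : List A → ℝ) : EReal :=
  Filter.liminf (fun w => (g w : EReal)) (wordsFilter W)

/-- `limsup_{|w| → ∞} g w` over `w ∈ W`, valued in the extended reals. -/
noncomputable def limsupWords (W : Set (List A)) (g : List A → ℝ) : EReal :=
  Filter.limsup (fun w => (g w : EReal)) (wordsFilter W)

/-- `ν(v) = liminf_{|w| → ∞} l_v(w)/|w|`, where
`l_v(w) = (max number of pairwise disjoint copies of v in w) ⬝ |v|`. -/
noncomputable def nu (W : Set (List A)) (v : List A) : EReal :=
  liminfWords W (fun w => ((maxDisjoint v w * v.length : ℕ) : ℝ) / (w.length : ℝ))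

/-- Condition (PQ): uniform positivity of quasiweights. -/
def PQ (W : Set (List A)) : Prop :=
  ∃ C : ℝ, 0 < C ∧ ∀ v ∈ W, v ≠ [] → (C : EReal) ≤ nu W v

/-- Unique ergodicity: all word frequencies `♯_v(w)/|w|` converge as `|w| → ∞`. -/
def UniquelyErgodic (Ω : Set (ℤ → A)) : Prop :=
  ∀ v ∈ words Ω, ∃ x : ℝ,
    TendstoWords (words Ω) (fun w => (occ v w : ℝ) / (w.length : ℝ)) x

/-- `F : W → ℝ` is subadditive. -/
def IsSubadditive (W : Set (List A)) (F : List A → ℝ) : Prop :=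
  ∀ a b : List A, a ∈ W → b ∈ W → a ++ b ∈ W → F (a ++ b) ≤ F a + F b

/-- `F^(n) = max { F v / |v| : v ∈ W, |v| = n }`. -/
noncomputable def wordSup (W : Set (List A)) (F : List A → ℝ) (n : ℕ) : ℝ :=
  sSup ((fun v => F v / (v.length : ℝ)) '' {v | v ∈ W ∧ v.length = n})

/-- Condition (SET): the uniform subadditive ergodic theorem holds, i.e. for every
subadditive `F` the limit `lim_{|w|→∞} F(w)/|w|` exists and equals `inf_{n ≥ 1} F^(n)`
(in the extended reals). -/
def SET (W : Set (List A)) : Prop :=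
  ∀ F : List A → ℝ, IsSubadditive W F →
    Filter.Tendsto (fun w => ((F w / (w.length : ℝ) : ℝ) : EReal)) (wordsFilter W)
      (nhds (⨅ n : {n : ℕ // 1 ≤ n}, ((wordSup W F n.1 : ℝ) : EReal)))

/-- A Banach-space-valued function `F : W → B` is additive. -/
def IsAdditive {B : Type*} [SeminormedAddCommGroup B] (W : Set (List A))
    (F : List A → B) : Prop :=
  ∃ D : ℝ, 0 < D ∧ ∃ c : ℕ → ℝ, Antitone c ∧ (∀ n, 0 ≤ c n) ∧
    Filter.Tendsto c Filter.atTop (nhds 0) ∧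
    (∀ vs : List (List A), (∀ v ∈ vs, v ∈ W) → vs.flatten ∈ W →
      ‖F vs.flatten - (vs.map F).sum‖ ≤ (vs.map fun v => c v.length * (v.length : ℝ)).sum) ∧
    ∀ v ∈ W, ‖F v‖ ≤ D * (v.length : ℝ)

/-- Condition (HP): powers in `W` have uniformly bounded exponent. -/
def HP (W : Set (List A)) : Prop :=
  ∃ N : ℕ, 0 < N ∧ ∀ v : List A, v ≠ [] → ∀ k : ℕ,
    (List.replicate k v).flatten ∈ W → k ≤ N

/-- Condition (PW): uniform positivity of weights. -/
def PW (W : Set (List A)) : Prop :=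
  ∃ E : ℝ, 0 < E ∧ ∀ v ∈ W, v ≠ [] →
    (E : EReal) ≤ liminfWords W (fun w => ((occ v w * v.length : ℕ) : ℝ) / (w.length : ℝ))

/-- Linear repetitivity. -/
def LinearlyRepetitive (W : Set (List A)) : Prop :=
  ∃ D : ℝ, 0 < D ∧ ∀ v ∈ W, v ≠ [] → ∀ w ∈ W, D * (v.length : ℝ) ≤ (w.length : ℝ) →
    v <:+: w

/-- Aperiodicity: no element of `Ω` is periodic. -/
def Aperiodic (Ω : Set (ℤ → A)) : Prop :=
  ∀ ω ∈ Ω, ∀ p : ℕ, 1 ≤ p → shiftZ (p : ℤ) ω ≠ ω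

/-- `m(n)`: the minimal length of a return word of a word of length `n` in `W`. -/
noncomputable def mRet (W : Set (List A)) (n : ℕ) : ℕ :=
  sInf {k : ℕ | ∃ v z : List A, v ∈ W ∧ v.length = n ∧ IsReturnWord W z v ∧ z.length = k}

/-- `k_ω^w`: the minimal nonnegative position at which `w` occurs in `ω`. -/
noncomputable def firstOcc (ω : ℤ → A) (w : List A) : ℕ :=
  sInf {k : ℕ | OccursAt w ω (k : ℤ)}

/-- `F_ω(w) = ∑_{j=0}^{|w|-1} f(T^{k_ω^w + j} ω)`. -/
noncomputable def birkhoffF {B : Type*} [AddCommMonoid B] (f : (ℤ → A) → B)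
    (ω : ℤ → A) (w : List A) : B :=
  ∑ j ∈ Finset.range w.length, f (shiftZ ((firstOcc ω w : ℤ) + (j : ℤ)) ω)



section AuxProof

variable {A : Type*}

lemma drop_take_mem_words {Ω : Set (ℤ → A)} {w : List A} (hw : w ∈ words Ω) (j m : ℕ) :
    (w.drop j).take m ∈ words Ω := by
  obtain ⟨ω, hω, k, hk⟩ := hw
  refine ⟨ω, hω, k + j, fun i => ?_⟩
  have hi : (i : ℕ) < ((w.drop j).take m).length := i.2
  have hi' : j + (i : ℕ) < w.length := by
    simp only [List.length_take, List.length_drop, lt_min_iff] at hi; omega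
  have h2 := hk ⟨j + i, hi'⟩
  simp only [List.get_eq_getElem] at h2 ⊢
  rw [List.getElem_take, List.getElem_drop, ← h2]
  congr 1
  push_cast; ring

lemma exists_word_of_length {Ω : Set (ℤ → A)} (hne : Ω.Nonempty) (n : ℕ) :
    ∃ w ∈ words Ω, w.length = n := by
  obtain ⟨ω, hω⟩ := hne
  refine ⟨List.ofFn (fun i : Fin n => ω i), ⟨ω, hω, 0, fun i => ?_⟩, by simp⟩
  simp [List.get_ofFn]

lemma flatten_blocks (u : List A) (n k : ℕ) :
    ((List.range k).map (fun i => (u.drop (i*n)).take n)).flatten = u.take (k*n) := by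
  induction k with
  | zero => simp
  | succ k ih =>
      rw [List.range_succ, List.map_append, List.flatten_append, ih]
      rw [add_mul, one_mul, List.take_add]
      simp

lemma reindex {B : Type*} [AddCommMonoid B] (L n : ℕ) (hn : 0 < n) (hL : n ≤ L) (f : ℕ → B) :
    ∑ s ∈ Finset.range n, ∑ i ∈ Finset.range ((L - s)/n), f (s + i*n)
      = ∑ j ∈ Finset.range (L - n + 1), f j := by
  have hrw : ∑ s ∈ Finset.range n, ∑ i ∈ Finset.range ((L - s)/n), f (s + i*n)
      = ∑ x ∈ (Finset.range n).sigma (fun s => Finset.range ((L - s)/n)), f (x.1 + x.2 * n) :=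
    by rw [Finset.sum_sigma]
  rw [hrw]
  refine Finset.sum_nbij' (i := fun p => p.1 + p.2 * n) (j := fun j => (⟨j % n, j / n⟩ : Σ _ : ℕ, ℕ))
    ?_ ?_ ?_ ?_ ?_
  · rintro ⟨s, i⟩ hp
    simp only [Finset.mem_sigma, Finset.mem_range] at hp
    obtain ⟨hs, hi⟩ := hp
    have h1 : (i+1) * n ≤ L - s := (Nat.le_div_iff_mul_le hn).1 hi
    rw [add_mul, one_mul] at h1
    simp only [Finset.mem_range]
    omega
  · intro j hj
    simp only [Finset.mem_range] at hj
    simp only [Finset.mem_sigma, Finset.mem_range]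
    refine ⟨Nat.mod_lt _ hn, ?_⟩
    have h2 : j / n + 1 ≤ (L - j % n) / n := by
      rw [Nat.le_div_iff_mul_le hn, add_mul, one_mul]
      have h3 := Nat.div_add_mod j n
      have h4 : j / n * n = n * (j / n) := Nat.mul_comm _ _
      omega
    omega
  · rintro ⟨s, i⟩ hp
    simp only [Finset.mem_sigma, Finset.mem_range] at hp
    obtain ⟨hs, hi⟩ := hp
    have h5 : (s + i * n) % n = s := by
      rw [Nat.add_mul_mod_self_right, Nat.mod_eq_of_lt hs]
    have h6 : (s + i * n) / n = i := by
      rw [Nat.add_mul_div_right _ _ hn, Nat.div_eq_of_lt hs, Nat.zero_add]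
    simp only [h5, h6]
  · intro j hj
    simp only
    have h3 := Nat.div_add_mod j n
    have h4 : j / n * n = n * (j / n) := Nat.mul_comm _ _
    omega
  · rintro ⟨s, i⟩ _
    rfl

lemma occ_eq_card [DecidableEq A] (v w : List A) (n : ℕ) (hv : v.length = n)
    (hL : n ≤ w.length) :
    occ v w = ((Finset.range (w.length - n + 1)).filter
      (fun j => (w.drop j).take n = v)).card := by
  rw [occ, ← Set.ncard_coe_finset]
  congr 1
  ext i
  simp only [Finset.coe_filter, Set.mem_setOf_eq, Finset.mem_range, OccursIn, hv]
  constructor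
  · rintro ⟨h1, h2⟩
    have h3 : v = (w.drop i).take v.length := List.prefix_iff_eq_take.1 h2
    rw [hv] at h3
    exact ⟨by omega, h3.symm⟩
  · rintro ⟨h1, h2⟩
    refine ⟨by omega, ?_⟩
    rw [List.prefix_iff_eq_take, hv, h2]

end AuxProof

set_option maxHeartbeats 2000000 in
/-- on a strictly ergodic subshift, every Banach-space-valued additive
function `F` satisfies a uniform ergodic theorem: `lim_{|w|→∞} F(w)/|w|` exists. -/
theorem additive_limit_exists
    {A : Type*} [Fintype A] [Nonempty A] [TopologicalSpace A] [DiscreteTopology A]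
    (Ω : Set (ℤ → A)) (hΩ : IsSubshift Ω) (hne : Ω.Nonempty) (hmin : IsMinimal Ω)
    (hue : UniquelyErgodic Ω)
    (B : Type*) [NormedAddCommGroup B] [NormedSpace ℝ B] [CompleteSpace B]
    (F : List A → B) (hF : IsAdditive (words Ω) F) :
    ∃ x : B, TendstoWords (words Ω) (fun w => ((w.length : ℝ))⁻¹ • F w) x := by
  classical
  obtain ⟨D, hD, c, hc_anti, hc_nonneg, hc_tendsto, hA1, hA2⟩ := hF
  choose! nu hnu using hue
  set W := words Ω with hWdef
  -- the finite set of words of length `n`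
  set V : ℕ → Finset (List A) := fun n =>
    ((Finset.univ : Finset (Fin n → A)).image List.ofFn).filter (· ∈ W) with hVdef
  have hVmem : ∀ n v, v ∈ V n → v ∈ W ∧ v.length = n := by
    intro n v hv
    simp only [hVdef, Finset.mem_filter, Finset.mem_image, Finset.mem_univ, true_and] at hv
    obtain ⟨⟨g, hg⟩, h2⟩ := hv
    exact ⟨h2, by rw [← hg]; simp⟩
  have hVmem' : ∀ v : List A, v ∈ W → v ∈ V v.length := by
    intro v hv
    simp only [hVdef, Finset.mem_filter, Finset.mem_image, Finset.mem_univ, true_and]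
    exact ⟨⟨v.get, List.ofFn_get v⟩, hv⟩
  -- Step 1: the decomposition estimate for a fixed offset `s`
  have hdecomp : ∀ n, 0 < n → ∀ w ∈ W, n ≤ w.length → ∀ s, s < n →
      ‖F w - ∑ i ∈ Finset.range ((w.length - s)/n), F ((w.drop (s + i*n)).take n)‖
        ≤ c n * w.length + 2*(c 0 + D) * n := by
    intro n hn w hw hL s hs
    set L := w.length with hLdef
    set k := (L - s)/n with hkdef
    set bl : ℕ → List A := fun i => (w.drop (s + i*n)).take n with hbldef
    set p : List A := w.take s with hpdef
    set r : List A := w.drop (s + k*n) with hrdef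
    set vs : List (List A) := p :: ((List.range k).map bl ++ [r]) with hvsdef
    have hkn : k * n ≤ L - s := Nat.div_mul_le_self _ _
    have hkup : ∀ i, i < k → i * n + n ≤ L - s := by
      intro i hi
      rw [hkdef] at hi
      have h2 : (i+1) * n ≤ L - s := (Nat.le_div_iff_mul_le hn).1 hi
      rw [add_mul, one_mul] at h2
      omega
    have hmod : k * n + (L - s) % n = L - s := by
      rw [hkdef]; exact Nat.div_add_mod' _ _
    have hflat : vs.flatten = w := by
      rw [hvsdef, List.flatten_cons, List.flatten_append]
      have h1 : (List.range k).map bl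
          = (List.range k).map (fun i => ((w.drop s).drop (i*n)).take n) := by
        apply List.map_congr_left
        intro i _
        rw [hbldef, List.drop_drop]
      rw [h1, flatten_blocks]
      have h2 : r = (w.drop s).drop (k*n) := by rw [hrdef, List.drop_drop]
      simp only [List.flatten_cons, List.flatten_nil, List.append_nil, h2,
        List.take_append_drop]
      exact List.take_append_drop s w
    have hmem : ∀ v ∈ vs, v ∈ W := by
      intro v hv
      rw [hvsdef] at hv
      simp only [List.mem_cons, List.mem_append, List.mem_map, List.mem_range,
        List.mem_singleton] at hv
      rcases hv with h | ⟨i, _, h⟩ | h | h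
      · subst h
        have := drop_take_mem_words hw 0 s
        rwa [List.drop_zero] at this
      · subst h
        exact drop_take_mem_words hw _ _
      · subst h
        have := drop_take_mem_words hw (s + k*n) L
        rwa [List.take_of_length_le (by simp [hLdef])] at this
      · simp at h
    have h1 := hA1 vs hmem (by rw [hflat]; exact hw)
    rw [hflat] at h1
    -- lengths
    clear_value k
    have hplen : p.length = s := by
      have h7 : w.length = L := rfl
      rw [hpdef, List.length_take]; omega
    have hbllen : ∀ i < k, (bl i).length = n := by
      intro i hi
      have h2 := hkup i hi
      have h7 : w.length = L := rfl
      rw [hbldef]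
      simp only [List.length_take, List.length_drop]
      omega
    have hrlen : r.length < n := by
      have h4 : (L - s) % n < n := Nat.mod_lt _ hn
      have h6 : r.length = w.length - (s + k * n) := by rw [hrdef, List.length_drop]
      have h7 : w.length = L := rfl
      omega
    have hrlen' : r.length = L - (s + k*n) := by rw [hrdef, List.length_drop]
    -- sums over the decomposition
    have hsum1 : (vs.map F).sum = F p + (∑ i ∈ Finset.range k, F (bl i)) + F r := by
      rw [hvsdef]
      simp only [List.map_cons, List.sum_cons, List.map_append, List.sum_append,
        List.map_map, List.map_nil, List.sum_cons, List.sum_nil, add_zero]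
      have : ((List.range k).map (F ∘ bl)).sum = ∑ i ∈ Finset.range k, F (bl i) := rfl
      rw [this]; abel
    have hsum2 : (vs.map (fun v => c v.length * (v.length : ℝ))).sum
        = c p.length * (p.length : ℝ)
          + (∑ i ∈ Finset.range k, c (bl i).length * ((bl i).length : ℝ))
          + c r.length * (r.length : ℝ) := by
      rw [hvsdef]
      simp only [List.map_cons, List.sum_cons, List.map_append, List.sum_append,
        List.map_map, List.map_nil, List.sum_nil, add_zero]
      have : ((List.range k).map ((fun v : List A => c v.length * (v.length : ℝ)) ∘ bl)).sum
          = ∑ i ∈ Finset.range k, c (bl i).length * ((bl i).length : ℝ) := rfl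
      rw [this]; ring
    rw [hsum1, hsum2] at h1
    -- bound the cost terms
    have hcost1 : c p.length * (p.length : ℝ) ≤ c 0 * n := by
      have := hc_anti (Nat.zero_le p.length)
      have h6 : (p.length : ℝ) ≤ n := by rw [hplen]; exact_mod_cast hs.le
      have h7 : (0:ℝ) ≤ (p.length : ℝ) := by positivity
      nlinarith [hc_nonneg p.length, hc_nonneg 0]
    have hcost3 : c r.length * (r.length : ℝ) ≤ c 0 * n := by
      have := hc_anti (Nat.zero_le r.length)
      have h6 : (r.length : ℝ) ≤ n := by exact_mod_cast hrlen.le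
      have h7 : (0:ℝ) ≤ (r.length : ℝ) := by positivity
      nlinarith [hc_nonneg r.length, hc_nonneg 0]
    have hcost2 : (∑ i ∈ Finset.range k, c (bl i).length * ((bl i).length : ℝ))
        ≤ c n * L := by
      have h8 : ∀ i ∈ Finset.range k, c (bl i).length * ((bl i).length : ℝ) = c n * n := by
        intro i hi
        rw [hbllen i (Finset.mem_range.1 hi)]
      rw [Finset.sum_congr rfl h8, Finset.sum_const, Finset.card_range, nsmul_eq_mul]
      have h9 : (k : ℝ) * n ≤ L := by
        have : k * n ≤ L := hkn.trans (Nat.sub_le _ _)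
        exact_mod_cast this
      nlinarith [hc_nonneg n]
    -- bound the boundary terms
    have hFp : ‖F p‖ ≤ D * n := by
      have := hA2 p (hmem p (by rw [hvsdef]; exact List.mem_cons_self))
      have h6 : (p.length : ℝ) ≤ n := by rw [hplen]; exact_mod_cast hs.le
      nlinarith
    have hFr : ‖F r‖ ≤ D * n := by
      have := hA2 r (hmem r (by rw [hvsdef]; simp))
      have h6 : (r.length : ℝ) ≤ n := by exact_mod_cast hrlen.le
      nlinarith
    calc ‖F w - ∑ i ∈ Finset.range k, F (bl i)‖
        = ‖(F w - (F p + (∑ i ∈ Finset.range k, F (bl i)) + F r)) + F p + F r‖ := by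
          congr 1; abel
      _ ≤ ‖F w - (F p + (∑ i ∈ Finset.range k, F (bl i)) + F r)‖ + ‖F p‖ + ‖F r‖ := by
          refine (norm_add_le _ _).trans ?_
          gcongr
          exact norm_add_le _ _
      _ ≤ (c 0 * n + c n * L + c 0 * n) + (D * n) + (D * n) := by
          gcongr
          refine h1.trans ?_
          have := hcost1; have := hcost2; have := hcost3
          linarith
      _ ≤ c n * L + 2*(c 0 + D) * n := by ring_nf; linarith
  -- Step 2: averaging over offsets
  have hkey1 : ∀ n, 0 < n → ∀ w ∈ W, n ≤ w.length →
      ‖(n:ℝ) • F w - ∑ j ∈ Finset.range (w.length - n + 1), F ((w.drop j).take n)‖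
        ≤ n * (c n * w.length + 2*(c 0 + D) * n) := by
    intro n hn w hw hL
    have heq : (n:ℝ) • F w - ∑ j ∈ Finset.range (w.length - n + 1), F ((w.drop j).take n)
        = ∑ s ∈ Finset.range n, (F w -
            ∑ i ∈ Finset.range ((w.length - s)/n), F ((w.drop (s + i*n)).take n)) := by
      rw [Finset.sum_sub_distrib,
        reindex w.length n hn hL (fun j => F ((w.drop j).take n)),
        Finset.sum_const, Finset.card_range, Nat.cast_smul_eq_nsmul]
    rw [heq]
    refine (norm_sum_le _ _).trans ?_
    have h2 : ∀ s ∈ Finset.range n,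
        ‖F w - ∑ i ∈ Finset.range ((w.length - s)/n), F ((w.drop (s + i*n)).take n)‖
          ≤ c n * w.length + 2*(c 0 + D) * n := fun s hs =>
      hdecomp n hn w hw hL s (Finset.mem_range.1 hs)
    refine (Finset.sum_le_sum h2).trans ?_
    rw [Finset.sum_const, Finset.card_range, nsmul_eq_mul]
  -- Step 3: fiberwise counting
  have hfiber : ∀ n, 0 < n → ∀ w ∈ W, n ≤ w.length →
      ∑ j ∈ Finset.range (w.length - n + 1), F ((w.drop j).take n)
        = ∑ v ∈ V n, (occ v w) • F v := by
    intro n hn w hw hL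
    have hmaps : ∀ j ∈ Finset.range (w.length - n + 1), (w.drop j).take n ∈ V n := by
      intro j hj
      simp only [Finset.mem_range] at hj
      have hlen : ((w.drop j).take n).length = n := by
        simp only [List.length_take, List.length_drop]
        omega
      have := hVmem' _ (drop_take_mem_words hw j n)
      rwa [hlen] at this
    rw [← Finset.sum_fiberwise_of_maps_to hmaps (fun j => F ((w.drop j).take n))]
    refine Finset.sum_congr rfl fun v hv => ?_
    obtain ⟨hvW, hvlen⟩ := hVmem n v hv
    have hinner : ∑ j ∈ (Finset.range (w.length - n + 1)).filter
        (fun j => (w.drop j).take n = v), F ((w.drop j).take n)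
        = ∑ j ∈ (Finset.range (w.length - n + 1)).filter
            (fun j => (w.drop j).take n = v), F v := by
      refine Finset.sum_congr rfl fun j hj => ?_
      rw [(Finset.mem_filter.1 hj).2]
    rw [hinner, Finset.sum_const, occ_eq_card v w n hvlen hL]
  -- the candidate limits at scale n
  set x : ℕ → B := fun n => ((n:ℝ))⁻¹ • ∑ v ∈ V n, nu v • F v with hxdef
  -- Step 4: the main approximation estimate
  have hkey : ∀ n, 0 < n → ∀ δ : ℝ, 0 < δ → ∃ L0 : ℕ, ∀ w ∈ W, L0 ≤ w.length →
      n ≤ w.length ∧ ‖((w.length : ℝ))⁻¹ • F w - x n‖ ≤ c n + δ := by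
    intro n hn δ hδ
    set Vc := ((V n).card : ℝ) with hVcdef
    have hVc0 : (0:ℝ) ≤ Vc := Nat.cast_nonneg _
    set ε' := δ / (2 * D * (Vc + 1)) with hε'def
    have hε' : 0 < ε' := div_pos hδ (by nlinarith)
    have h1 : ∀ v ∈ V n, ∃ L1 : ℕ, ∀ w ∈ W, L1 ≤ w.length →
        ‖(occ v w : ℝ)/(w.length : ℝ) - nu v‖ ≤ ε' :=
      fun v hv => (hnu v (hVmem n v hv).1) ε' hε'
    choose! Lv hLv using h1
    set L1 := (V n).sup Lv with hL1def
    obtain ⟨L2, hL2⟩ : ∃ L2 : ℕ, ∀ L : ℕ, L2 ≤ L → 2*(c 0 + D)*n ≤ δ/2 * L := by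
      refine ⟨Nat.ceil ((2*(c 0 + D)*n) / (δ/2)), fun L hL => ?_⟩
      have h2 : (2*(c 0 + D)*n) / (δ/2) ≤ (L : ℝ) :=
        (Nat.le_ceil _).trans (by exact_mod_cast hL)
      have h3 : (0:ℝ) < δ/2 := by linarith
      calc 2*(c 0 + D)*n = (2*(c 0 + D)*n) / (δ/2) * (δ/2) := by field_simp
        _ ≤ (L : ℝ) * (δ/2) := by
            gcongr
        _ = δ/2 * L := by ring
    refine ⟨max (max L1 L2) n, fun w hw hLw => ?_⟩
    set L := w.length with hLdef
    have hLn : n ≤ L := le_trans (le_max_right _ _) hLw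
    have hLL1 : L1 ≤ L := le_trans ((le_max_left _ _).trans (le_max_left _ _)) hLw
    have hLL2 : L2 ≤ L := le_trans ((le_max_right _ _).trans (le_max_left _ _)) hLw
    refine ⟨hLn, ?_⟩
    have hLpos : (0:ℝ) < L := by
      have : 0 < L := lt_of_lt_of_le hn hLn
      exact_mod_cast this
    have hnpos : (0:ℝ) < n := by exact_mod_cast hn
    set S := ∑ j ∈ Finset.range (L - n + 1), F ((w.drop j).take n) with hSdef
    have hsplit : (L:ℝ)⁻¹ • F w - x n
        = ((n:ℝ) * L)⁻¹ • ((n:ℝ) • F w - S) + ((n:ℝ)⁻¹ • ((L:ℝ)⁻¹ • S) - x n) := by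
      rw [smul_sub, mul_inv, smul_smul, smul_smul]
      have hne1 : (n:ℝ) ≠ 0 := ne_of_gt hnpos
      have : (n:ℝ)⁻¹ * (L:ℝ)⁻¹ * (n:ℝ) = (L:ℝ)⁻¹ := by field_simp
      rw [this]
      abel
    rw [hsplit]
    have hterm1 : ‖((n:ℝ) * L)⁻¹ • ((n:ℝ) • F w - S)‖ ≤ c n + δ/2 := by
      rw [norm_smul]
      have h4 := hkey1 n hn w hw hLn
      have h5 : ‖((n:ℝ) * L)⁻¹‖ = ((n:ℝ) * L)⁻¹ := by
        rw [Real.norm_eq_abs, abs_of_pos (by positivity)]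
      rw [h5]
      have h6 : ((n:ℝ) * L)⁻¹ * ‖(n:ℝ) • F w - S‖
          ≤ ((n:ℝ) * L)⁻¹ * (n * (c n * L + 2*(c 0 + D) * n)) := by
        gcongr
      refine h6.trans ?_
      have h7 : ((n:ℝ) * L)⁻¹ * (n * (c n * L + 2*(c 0 + D) * n))
          = c n + (2*(c 0 + D) * n) / L := by
        field_simp
      rw [h7]
      have h8 : (2*(c 0 + D) * n) / L ≤ δ/2 := by
        rw [div_le_iff₀ hLpos]
        exact hL2 L hLL2
      linarith
    have hterm2 : ‖(n:ℝ)⁻¹ • ((L:ℝ)⁻¹ • S) - x n‖ ≤ δ/2 := by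
      have hS : (L:ℝ)⁻¹ • S = ∑ v ∈ V n, ((occ v w : ℝ)/(L:ℝ)) • F v := by
        rw [hSdef, hfiber n hn w hw hLn, Finset.smul_sum]
        refine Finset.sum_congr rfl fun v hv => ?_
        rw [← Nat.cast_smul_eq_nsmul ℝ, smul_smul, div_eq_inv_mul]
      rw [hS, hxdef]
      have hdiff : (n:ℝ)⁻¹ • (∑ v ∈ V n, ((occ v w : ℝ)/(L:ℝ)) • F v)
          - (n:ℝ)⁻¹ • ∑ v ∈ V n, nu v • F v
          = (n:ℝ)⁻¹ • ∑ v ∈ V n, (((occ v w : ℝ)/(L:ℝ)) - nu v) • F v := by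
        rw [← smul_sub, ← Finset.sum_sub_distrib]
        congr 1
        refine Finset.sum_congr rfl fun v hv => ?_
        rw [sub_smul]
      rw [hdiff, norm_smul]
      have h9 : ‖(n:ℝ)⁻¹‖ = (n:ℝ)⁻¹ := by
        rw [Real.norm_eq_abs, abs_of_pos (by positivity)]
      rw [h9]
      have h10 : ‖∑ v ∈ V n, (((occ v w : ℝ)/(L:ℝ)) - nu v) • F v‖
          ≤ ∑ v ∈ V n, ε' * (D * n) := by
        refine (norm_sum_le _ _).trans (Finset.sum_le_sum fun v hv => ?_)
        rw [norm_smul]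
        obtain ⟨hvW, hvlen⟩ := hVmem n v hv
        have h11 : ‖((occ v w : ℝ)/(L:ℝ)) - nu v‖ ≤ ε' :=
          hLv v hv w hw (le_trans (Finset.le_sup hv) hLL1)
        have h12 : ‖F v‖ ≤ D * n := by
          have := hA2 v hvW
          rw [hvlen] at this
          exact this
        have h13 : (0:ℝ) ≤ ‖((occ v w : ℝ)/(L:ℝ)) - nu v‖ := norm_nonneg _
        nlinarith [norm_nonneg (F v)]
      have h14 : (n:ℝ)⁻¹ * ‖∑ v ∈ V n, (((occ v w : ℝ)/(L:ℝ)) - nu v) • F v‖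
          ≤ (n:ℝ)⁻¹ * (Vc * (ε' * (D * n))) := by
        gcongr
        refine h10.trans (le_of_eq ?_)
        rw [Finset.sum_const, nsmul_eq_mul]
      refine h14.trans ?_
      have h15 : (n:ℝ)⁻¹ * (Vc * (ε' * (D * n))) = ε' * D * Vc := by
        field_simp
      rw [h15]
      have h16 : ε' * D * Vc ≤ ε' * D * (Vc + 1) := by nlinarith
      have h17 : ε' * D * (Vc + 1) = δ/2 := by
        rw [hε'def]
        field_simp
      linarith
    calc ‖((n:ℝ) * L)⁻¹ • ((n:ℝ) • F w - S) + ((n:ℝ)⁻¹ • ((L:ℝ)⁻¹ • S) - x n)‖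
        ≤ ‖((n:ℝ) * L)⁻¹ • ((n:ℝ) • F w - S)‖ + ‖(n:ℝ)⁻¹ • ((L:ℝ)⁻¹ • S) - x n‖ :=
          norm_add_le _ _
      _ ≤ (c n + δ/2) + δ/2 := add_le_add hterm1 hterm2
      _ = c n + δ := by ring
  -- Step 5: a Cauchy sequence of approximants
  choose wseq hwseqW hwseqlen using fun m => exists_word_of_length hne m
  set y : ℕ → B := fun m => (((wseq m).length : ℝ))⁻¹ • F (wseq m) with hydef
  have hcn : ∀ ε : ℝ, 0 < ε → ∃ n : ℕ, 0 < n ∧ c n < ε := by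
    intro ε hε
    have := Metric.tendsto_atTop.1 hc_tendsto ε hε
    obtain ⟨N, hN⟩ := this
    refine ⟨N + 1, Nat.succ_pos _, ?_⟩
    have := hN (N+1) (Nat.le_succ _)
    rw [Real.dist_eq, sub_zero, abs_of_nonneg (hc_nonneg _)] at this
    exact this
  have hcauchy : CauchySeq y := by
    rw [Metric.cauchySeq_iff]
    intro ε hε
    obtain ⟨n, hn, hcnε⟩ := hcn (ε/4) (by linarith)
    obtain ⟨L0, hL0⟩ := hkey n hn (ε/8) (by linarith)
    refine ⟨L0, fun a ha b hb => ?_⟩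
    have h1 := (hL0 (wseq a) (hwseqW a) (by rw [hwseqlen]; exact ha)).2
    have h2 := (hL0 (wseq b) (hwseqW b) (by rw [hwseqlen]; exact hb)).2
    rw [dist_eq_norm]
    calc ‖y a - y b‖ = ‖(y a - x n) - (y b - x n)‖ := by congr 1; abel
      _ ≤ ‖y a - x n‖ + ‖y b - x n‖ := norm_sub_le _ _
      _ ≤ (c n + ε/8) + (c n + ε/8) := add_le_add h1 h2
      _ < ε := by linarith
  obtain ⟨xlim, hxlim⟩ := cauchySeq_tendsto_of_complete hcauchy
  refine ⟨xlim, ?_⟩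
  intro ε hε
  obtain ⟨n, hn, hcnε⟩ := hcn (ε/4) (by linarith)
  obtain ⟨L0, hL0⟩ := hkey n hn (ε/8) (by linarith)
  have hxn : ‖xlim - x n‖ ≤ c n + ε/8 := by
    have htt : Filter.Tendsto (fun m => ‖y m - x n‖) Filter.atTop (nhds ‖xlim - x n‖) :=
      ((hxlim.sub tendsto_const_nhds).norm)
    refine le_of_tendsto htt ?_
    refine Filter.eventually_atTop.2 ⟨L0, fun m hm => ?_⟩
    exact (hL0 (wseq m) (hwseqW m) (by rw [hwseqlen]; exact hm)).2
  refine ⟨L0, fun w hw hLw => ?_⟩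
  have h1 := (hL0 w hw hLw).2
  calc ‖((w.length : ℝ))⁻¹ • F w - xlim‖
      = ‖(((w.length : ℝ))⁻¹ • F w - x n) - (xlim - x n)‖ := by congr 1; abel
    _ ≤ ‖((w.length : ℝ))⁻¹ • F w - x n‖ + ‖xlim - x n‖ := norm_sub_le _ _
    _ ≤ (c n + ε/8) + (c n + ε/8) := add_le_add h1 hxn
    _ ≤ ε := by linarith

end SubshiftErgodic
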